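/- Suppose 0 < b < 1 and 1 - b < a < 1 + b. Then the fixed points of the Lozi map L_{a,b} are exactly p₁ = (1/(1+a-b), 1/(1+a-b)) and p₂ = (1/(1-a-b), 1/(1-a-b)); setting N = (1+a-b)/((b-1)² + a²), the points n₁ = (N, (1-aN)/(1-b)) and n₂ = ((1-aN)/(1-b), N) satisfy L_{a,b}(n₁) = n₂ and L_{a,b}(n₂) = n₁; and every fixed point of the fourth iterate L_{a,b}⁴ is one of p₁, p₂, n₁, n₂. -/

import Mathlib

/-- The Lozi map `L_{a,b}(x,y) = (1 - a|x| + by, x)`. -/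
noncomputable def lozi (a b : ℝ) : ℝ × ℝ → ℝ × ℝ :=
  fun p => (1 - a * |p.1| + b * p.2, p.1)

set_option maxHeartbeats 4000000 in
theorem lozi_periodic_points_structure :
    ∀ a b : ℝ, 0 < b → b < 1 → 1 - b < a → a < 1 + b →
      (∀ p : ℝ × ℝ, lozi a b p = p ↔
        p = (1 / (1 + a - b), 1 / (1 + a - b)) ∨
        p = (1 / (1 - a - b), 1 / (1 - a - b))) ∧
      lozi a b ((1 + a - b) / ((b - 1) ^ 2 + a ^ 2),
          (1 - a * ((1 + a - b) / ((b - 1) ^ 2 + a ^ 2))) / (1 - b)) =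
        ((1 - a * ((1 + a - b) / ((b - 1) ^ 2 + a ^ 2))) / (1 - b),
          (1 + a - b) / ((b - 1) ^ 2 + a ^ 2)) ∧
      lozi a b ((1 - a * ((1 + a - b) / ((b - 1) ^ 2 + a ^ 2))) / (1 - b),
          (1 + a - b) / ((b - 1) ^ 2 + a ^ 2)) =
        ((1 + a - b) / ((b - 1) ^ 2 + a ^ 2),
          (1 - a * ((1 + a - b) / ((b - 1) ^ 2 + a ^ 2))) / (1 - b)) ∧
      (∀ p : ℝ × ℝ, (lozi a b)^[4] p = p →
        p = (1 / (1 + a - b), 1 / (1 + a - b)) ∨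
        p = (1 / (1 - a - b), 1 / (1 - a - b)) ∨
        p = ((1 + a - b) / ((b - 1) ^ 2 + a ^ 2),
          (1 - a * ((1 + a - b) / ((b - 1) ^ 2 + a ^ 2))) / (1 - b)) ∨
        p = ((1 - a * ((1 + a - b) / ((b - 1) ^ 2 + a ^ 2))) / (1 - b),
          (1 + a - b) / ((b - 1) ^ 2 + a ^ 2))) := by
  intro a b hb0 hb1 hab1 hab2
  have ha : (0:ℝ) < a := by linarith
  have h1b : (0:ℝ) < 1 - b := by linarith
  have g1b : (0:ℝ) < 1 + b := by linarith
  have hopn : (0:ℝ) < 1 + a - b := by linarith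
  have honm : 1 - a - b < (0:ℝ) := by linarith
  have hQ : (0:ℝ) < (b - 1) ^ 2 + a ^ 2 := by nlinarith [sq_nonneg (b - 1), mul_pos ha ha]
  have hQ' : ((b - 1) ^ 2 + a ^ 2) ≠ 0 := ne_of_gt hQ
  have h1b' : (1:ℝ) - b ≠ 0 := ne_of_gt h1b
  have f1 : (0:ℝ) < a - 1 + b := by linarith
  have f2 : (0:ℝ) < a + 1 - b := by linarith
  have g2 : (0:ℝ) < 1 + b - a := by linarith
  have g3 : (0:ℝ) < 1 + a + b := by linarith
  have f3 : (0:ℝ) < a^2 + (1 + b)^2 := by nlinarith [sq_nonneg a, mul_pos g1b g1b]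
  have f4 : (0:ℝ) < a^2 + (1 - b)^2 := by nlinarith [sq_nonneg (1 - b), mul_pos ha ha]
  have hbb : (0:ℝ) < 1 - b^2 := by nlinarith [mul_pos h1b g1b]
  have hDA : (0:ℝ) < 1 - 2*b^2 + b^4 + a^4 := by
    nlinarith [sq_nonneg (1 - b^2), mul_pos (mul_pos ha ha) (mul_pos ha ha)]
  have hDp : (0:ℝ) < a^4 + 4*a^2*b - 1 + 2*b^2 - b^4 := by
    nlinarith [mul_pos (mul_pos f1 f2) f3]
  have hDn : a^4 - 4*a^2*b - 1 + 2*b^2 - b^4 < 0 := by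
    nlinarith [mul_pos (mul_pos g2 g3) f4]
  have hB2 : (0:ℝ) < a^2 + 1 - b^2 := by nlinarith [sq_nonneg a]
  have hrw : (1 - a * ((1 + a - b) / ((b - 1) ^ 2 + a ^ 2))) / (1 - b)
      = ((b - 1) ^ 2 + a ^ 2 - a * (1 + a - b)) / ((1 - b) * ((b - 1) ^ 2 + a ^ 2)) := by
    rw [div_eq_div_iff (ne_of_gt h1b) (ne_of_gt (mul_pos h1b hQ))]
    field_simp
  refine ⟨?_, ?_, ?_, ?_⟩
  · -- fixed points
    intro p
    obtain ⟨x, y⟩ := p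
    simp only [lozi, Prod.mk.injEq]
    constructor
    · rintro ⟨h1, rfl⟩
      rcases abs_cases x with ⟨hax, hxs⟩ | ⟨hax, hxs⟩ <;> rw [hax] at h1
      · left
        have hx : x = 1 / (1 + a - b) := by
          rw [eq_div_iff (ne_of_gt hopn)]
          linear_combination -h1
        exact ⟨hx, hx⟩
      · right
        have hx : x = 1 / (1 - a - b) := by
          rw [eq_div_iff (ne_of_lt honm)]
          linear_combination -h1
        exact ⟨hx, hx⟩
    · rintro (⟨rfl, rfl⟩ | ⟨rfl, rfl⟩)
      · refine ⟨?_, rfl⟩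
        rw [abs_of_nonneg (le_of_lt (one_div_pos.mpr hopn))]
        field_simp
        ring
      · refine ⟨?_, rfl⟩
        rw [abs_of_neg (one_div_neg.mpr honm)]
        have h1' : (1:ℝ) - a - b ≠ 0 := ne_of_lt honm
        field_simp
        ring
  · -- lozi n1 = n2
    have hN : (0:ℝ) ≤ (1 + a - b) / ((b - 1) ^ 2 + a ^ 2) := le_of_lt (div_pos hopn hQ)
    show (1 - a * |(1 + a - b) / ((b - 1) ^ 2 + a ^ 2)| +
        b * ((1 - a * ((1 + a - b) / ((b - 1) ^ 2 + a ^ 2))) / (1 - b)),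
        (1 + a - b) / ((b - 1) ^ 2 + a ^ 2)) = _
    rw [Prod.mk.injEq]
    refine ⟨?_, rfl⟩
    rw [abs_of_nonneg hN]
    field_simp
    ring
  · -- lozi n2 = n1
    have hM : (1 - a * ((1 + a - b) / ((b - 1) ^ 2 + a ^ 2))) / (1 - b) ≤ 0 := by
      apply div_nonpos_of_nonpos_of_nonneg _ (le_of_lt h1b)
      rw [sub_nonpos, ← mul_div_assoc, le_div_iff₀ hQ]
      nlinarith [mul_pos h1b f1]
    show (1 - a * |(1 - a * ((1 + a - b) / ((b - 1) ^ 2 + a ^ 2))) / (1 - b)| +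
        b * ((1 + a - b) / ((b - 1) ^ 2 + a ^ 2)),
        (1 - a * ((1 + a - b) / ((b - 1) ^ 2 + a ^ 2))) / (1 - b)) = _
    rw [Prod.mk.injEq]
    refine ⟨?_, rfl⟩
    rw [abs_of_nonpos hM]
    field_simp
    ring
  · -- period four points
    intro p hp
    obtain ⟨x, y⟩ := p
    have hp' : (1 - a * |1 - a * |1 - a * |1 - a * |x| + b * y| + b * x| +
          b * (1 - a * |x| + b * y)| +
        b * (1 - a * |1 - a * |x| + b * y| + b * x),
        1 - a * |1 - a * |1 - a * |x| + b * y| + b * x| + b * (1 - a * |x| + b * y)) =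
        (x, y) := hp
    set u := 1 - a * |x| + b * y with hu
    set v := 1 - a * |u| + b * x with hv
    rw [Prod.mk.injEq] at hp'
    obtain ⟨h1, h2⟩ := hp'
    rw [h2] at h1
    have hw : y = 1 - a * |v| + b * u := h2.symm
    clear h2 hp
    rcases abs_cases x with ⟨hax, hxs⟩ | ⟨hax, hxs⟩ <;> rw [hax] at hu <;>
      rcases abs_cases u with ⟨hau, hus⟩ | ⟨hau, hus⟩ <;> rw [hau] at hv <;>
        rcases abs_cases v with ⟨hav, hvs⟩ | ⟨hav, hvs⟩ <;> rw [hav] at hw <;>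
          rcases abs_cases y with ⟨hay, hys⟩ | ⟨hay, hys⟩ <;> rw [hay] at h1
    · -- pattern (1, 1, 1, 1)
      have kx : (a^4 + 4*a^2*b - 1 + 2*b^2 - b^4) * x = (a - 1 + b) * (a^2 + (1 + b)^2) := by
        linear_combination (2*a*b + a^3) * hu + (-b + b^3 - a^2) * hv + (a + a*b^2) * hw + (1 - b^2 - a^2*b) * h1
      have ky : (a^4 + 4*a^2*b - 1 + 2*b^2 - b^4) * y = (a - 1 + b) * (a^2 + (1 + b)^2) := by
        linear_combination (-b + b^3 - a^2) * hu + (a + a*b^2) * hv + (-1 + b^2 + a^2*b) * hw + (-2*a*b - a^3) * h1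
      left
      rw [Prod.mk.injEq]
      constructor
      · rw [eq_div_iff (ne_of_gt hopn)]
        apply mul_left_cancel₀ (ne_of_gt hDp)
        linear_combination (1 + a - b) * kx
      · rw [eq_div_iff (ne_of_gt hopn)]
        apply mul_left_cancel₀ (ne_of_gt hDp)
        linear_combination (1 + a - b) * ky
    · -- pattern (1, 1, 1, -1)
      exfalso
      have kz : (-1 + 2*b^2 - b^4 - a^4) * u = (a - 1 + b) * (1 + b - a) * (1 + a + b) := by
        linear_combination (-1 + b^2 - a^2*b) * hu + (2*a*b - a^3) * hv + (-b + b^3 + a^2) * hw + (-a - a*b^2) * h1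
      nlinarith [kz, mul_pos (mul_pos f1 g2) g3, mul_nonneg (le_of_lt hDA) hus]
    · -- pattern (1, 1, -1, 1)
      exfalso
      have kz : (-1 + 2*b^2 - b^4 - a^4) * x = (a - 1 + b) * (1 + b - a) * (1 + a + b) := by
        linear_combination (2*a*b - a^3) * hu + (-b + b^3 + a^2) * hv + (a + a*b^2) * hw + (1 - b^2 + a^2*b) * h1
      nlinarith [kz, mul_pos (mul_pos f1 g2) g3, mul_nonneg (le_of_lt hDA) hxs]
    · -- pattern (1, 1, -1, -1)
      exfalso
      have K1 : (a^2 + 1 - b^2) * (x - v) = 2*a := by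
        linear_combination (a) * hu + (-1 + b) * hv + (a) * hw + (-1 + b) * h1
      have K2 : (a^2 - 1 + b^2) * (u - y) = 2*a := by
        linear_combination (-1 + b) * hu + (a) * hv + (1 - b) * hw + (-a) * h1
      have K3 : (a^2 - 1 + b^2) * (x + v) = -2 - 2*b := by
        linear_combination (a) * hu + (-1 - b) * hv + (-a) * hw + (1 + b) * h1
      have hA2 : 0 < a^2 - 1 + b^2 := by
        by_contra hcon
        push_neg at hcon
        nlinarith [K2, mul_nonneg (neg_nonneg.mpr hcon) (show (0:ℝ) ≤ u - y by linarith)]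
      have key : (a^2 - 1 + b^2) * ((a^2 + 1 - b^2) * (2*x)) = 2*a*(a^2 - 1 + b^2) - (2 + 2*b)*(a^2 + 1 - b^2) := by
        linear_combination (a^2 - 1 + b^2) * K1 + (a^2 + 1 - b^2) * K3
      nlinarith [key, hA2, hB2, mul_nonneg (mul_nonneg hA2.le hB2.le) hxs, mul_pos hA2 g2, mul_pos g1b hbb]
    · -- pattern (1, -1, 1, 1)
      exfalso
      have kz : (-1 + 2*b^2 - b^4 - a^4) * y = (a - 1 + b) * (1 + b - a) * (1 + a + b) := by
        linear_combination (-b + b^3 + a^2) * hu + (a + a*b^2) * hv + (-1 + b^2 - a^2*b) * hw + (-2*a*b + a^3) * h1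
      nlinarith [kz, mul_pos (mul_pos f1 g2) g3, mul_nonneg (le_of_lt hDA) hys]
    · -- pattern (1, -1, 1, -1)
      have kx : (a^4 - 4*a^2*b - 1 + 2*b^2 - b^4) * x = (a^3 - a^2*b + a^2 - a*b^2 - 2*a*b - a + b^3 + b^2 - b - 1) := by
        linear_combination (-2*a*b + a^3) * hu + (-b + b^3 + a^2) * hv + (-a - a*b^2) * hw + (1 - b^2 + a^2*b) * h1
      have ky : (a^4 - 4*a^2*b - 1 + 2*b^2 - b^4) * y = (-a^3 - a^2*b + a^2 + a*b^2 + 2*a*b + a + b^3 + b^2 - b - 1) := by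
        linear_combination (-b + b^3 + a^2) * hu + (a + a*b^2) * hv + (-1 + b^2 - a^2*b) * hw + (-2*a*b + a^3) * h1
      right; right; left
      rw [Prod.mk.injEq]
      constructor
      · rw [eq_div_iff (ne_of_gt hQ)]
        apply mul_left_cancel₀ (ne_of_lt hDn)
        linear_combination ((b - 1) ^ 2 + a ^ 2) * kx
      · rw [hrw, eq_div_iff (ne_of_gt (mul_pos h1b hQ))]
        apply mul_left_cancel₀ (ne_of_lt hDn)
        linear_combination ((1 - b) * ((b - 1) ^ 2 + a ^ 2)) * ky
    · -- pattern (1, -1, -1, 1)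
      exfalso
      have K1 : (a^2 + 1 - b^2) * (y - u) = 2*a := by
        linear_combination (-1 + b) * hu + (a) * hv + (1 - b) * hw + (-a) * h1
      have K2 : (a^2 - 1 + b^2) * (x - v) = 2*a := by
        linear_combination (a) * hu + (1 - b) * hv + (a) * hw + (1 - b) * h1
      have K3 : (a^2 - 1 + b^2) * (y + u) = -2 - 2*b := by
        linear_combination (-1 - b) * hu + (-a) * hv + (-1 - b) * hw + (-a) * h1
      have hA2 : 0 < a^2 - 1 + b^2 := by
        by_contra hcon
        push_neg at hcon
        nlinarith [K2, mul_nonneg (neg_nonneg.mpr hcon) (show (0:ℝ) ≤ x - v by linarith)]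
      have key : (a^2 - 1 + b^2) * ((a^2 + 1 - b^2) * (2*y)) = 2*a*(a^2 - 1 + b^2) - (2 + 2*b)*(a^2 + 1 - b^2) := by
        linear_combination (a^2 - 1 + b^2) * K1 + (a^2 + 1 - b^2) * K3
      nlinarith [key, hA2, hB2, mul_nonneg (mul_nonneg hA2.le hB2.le) hys, mul_pos hA2 g2, mul_pos g1b hbb]
    · -- pattern (1, -1, -1, -1)
      exfalso
      have kz : (-1 + 2*b^2 - b^4 - a^4) * y = a^2*(a - 1 - b) + (b - 1)*(1 + b)*(a + 1 + b) := by
        linear_combination (-b + b^3 - a^2) * hu + (-a + a*b^2) * hv + (-1 + b^2 - a^2*b) * hw + (-a^3) * h1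
      nlinarith [kz, mul_pos (mul_pos ha ha) g2, mul_pos (mul_pos h1b g1b) g3, mul_pos hDA (neg_pos.mpr hys)]
    · -- pattern (-1, 1, 1, 1)
      exfalso
      have kz : (-1 + 2*b^2 - b^4 - a^4) * v = (a - 1 + b) * (1 + b - a) * (1 + a + b) := by
        linear_combination (a + a*b^2) * hu + (-1 + b^2 - a^2*b) * hv + (2*a*b - a^3) * hw + (b - b^3 - a^2) * h1
      nlinarith [kz, mul_pos (mul_pos f1 g2) g3, mul_nonneg (le_of_lt hDA) hvs]
    · -- pattern (-1, 1, 1, -1)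
      exfalso
      have K1 : (a^2 + 1 - b^2) * (u - y) = 2*a := by
        linear_combination (1 - b) * hu + (a) * hv + (-1 + b) * hw + (-a) * h1
      have K2 : (a^2 - 1 + b^2) * (v - x) = 2*a := by
        linear_combination (a) * hu + (-1 + b) * hv + (a) * hw + (-1 + b) * h1
      have K3 : (a^2 - 1 + b^2) * (u + y) = -2 - 2*b := by
        linear_combination (-1 - b) * hu + (a) * hv + (-1 - b) * hw + (a) * h1
      have hA2 : 0 < a^2 - 1 + b^2 := by
        by_contra hcon
        push_neg at hcon
        nlinarith [K2, mul_nonneg (neg_nonneg.mpr hcon) (show (0:ℝ) ≤ v - x by linarith)]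
      have key : (a^2 - 1 + b^2) * ((a^2 + 1 - b^2) * (2*u)) = 2*a*(a^2 - 1 + b^2) - (2 + 2*b)*(a^2 + 1 - b^2) := by
        linear_combination (a^2 - 1 + b^2) * K1 + (a^2 + 1 - b^2) * K3
      nlinarith [key, hA2, hB2, mul_nonneg (mul_nonneg hA2.le hB2.le) hus, mul_pos hA2 g2, mul_pos g1b hbb]
    · -- pattern (-1, 1, -1, 1)
      have kx : (a^4 - 4*a^2*b - 1 + 2*b^2 - b^4) * x = (-a^3 - a^2*b + a^2 + a*b^2 + 2*a*b + a + b^3 + b^2 - b - 1) := by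
        linear_combination (2*a*b - a^3) * hu + (-b + b^3 + a^2) * hv + (a + a*b^2) * hw + (1 - b^2 + a^2*b) * h1
      have ky : (a^4 - 4*a^2*b - 1 + 2*b^2 - b^4) * y = (a^3 - a^2*b + a^2 - a*b^2 - 2*a*b - a + b^3 + b^2 - b - 1) := by
        linear_combination (-b + b^3 + a^2) * hu + (-a - a*b^2) * hv + (-1 + b^2 - a^2*b) * hw + (2*a*b - a^3) * h1
      right; right; right
      rw [Prod.mk.injEq]
      constructor
      · rw [hrw, eq_div_iff (ne_of_gt (mul_pos h1b hQ))]
        apply mul_left_cancel₀ (ne_of_lt hDn)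
        linear_combination ((1 - b) * ((b - 1) ^ 2 + a ^ 2)) * kx
      · rw [eq_div_iff (ne_of_gt hQ)]
        apply mul_left_cancel₀ (ne_of_lt hDn)
        linear_combination ((b - 1) ^ 2 + a ^ 2) * ky
    · -- pattern (-1, 1, -1, -1)
      exfalso
      have kz : (-1 + 2*b^2 - b^4 - a^4) * x = a^2*(a - 1 - b) + (b - 1)*(1 + b)*(a + 1 + b) := by
        linear_combination (a^3) * hu + (-b + b^3 - a^2) * hv + (-a + a*b^2) * hw + (1 - b^2 + a^2*b) * h1
      nlinarith [kz, mul_pos (mul_pos ha ha) g2, mul_pos (mul_pos h1b g1b) g3, mul_pos hDA (neg_pos.mpr hxs)]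
    · -- pattern (-1, -1, 1, 1)
      exfalso
      have K1 : (a^2 + 1 - b^2) * (v - x) = 2*a := by
        linear_combination (a) * hu + (1 - b) * hv + (a) * hw + (1 - b) * h1
      have K2 : (a^2 - 1 + b^2) * (y - u) = 2*a := by
        linear_combination (1 - b) * hu + (a) * hv + (-1 + b) * hw + (-a) * h1
      have K3 : (a^2 - 1 + b^2) * (v + x) = -2 - 2*b := by
        linear_combination (-a) * hu + (-1 - b) * hv + (a) * hw + (1 + b) * h1
      have hA2 : 0 < a^2 - 1 + b^2 := by
        by_contra hcon
        push_neg at hcon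
        nlinarith [K2, mul_nonneg (neg_nonneg.mpr hcon) (show (0:ℝ) ≤ y - u by linarith)]
      have key : (a^2 - 1 + b^2) * ((a^2 + 1 - b^2) * (2*v)) = 2*a*(a^2 - 1 + b^2) - (2 + 2*b)*(a^2 + 1 - b^2) := by
        linear_combination (a^2 - 1 + b^2) * K1 + (a^2 + 1 - b^2) * K3
      nlinarith [key, hA2, hB2, mul_nonneg (mul_nonneg hA2.le hB2.le) hvs, mul_pos hA2 g2, mul_pos g1b hbb]
    · -- pattern (-1, -1, 1, -1)
      exfalso
      have kz : (-1 + 2*b^2 - b^4 - a^4) * u = a^2*(a - 1 - b) + (b - 1)*(1 + b)*(a + 1 + b) := by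
        linear_combination (-1 + b^2 - a^2*b) * hu + (a^3) * hv + (-b + b^3 - a^2) * hw + (a - a*b^2) * h1
      nlinarith [kz, mul_pos (mul_pos ha ha) g2, mul_pos (mul_pos h1b g1b) g3, mul_pos hDA (neg_pos.mpr hus)]
    · -- pattern (-1, -1, -1, 1)
      exfalso
      have kz : (-1 + 2*b^2 - b^4 - a^4) * v = a^2*(a - 1 - b) + (b - 1)*(1 + b)*(a + 1 + b) := by
        linear_combination (-a + a*b^2) * hu + (-1 + b^2 - a^2*b) * hv + (a^3) * hw + (b - b^3 + a^2) * h1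
      nlinarith [kz, mul_pos (mul_pos ha ha) g2, mul_pos (mul_pos h1b g1b) g3, mul_pos hDA (neg_pos.mpr hvs)]
    · -- pattern (-1, -1, -1, -1)
      have kx : (a^4 + 4*a^2*b - 1 + 2*b^2 - b^4) * x = (-(a + 1 - b) * (a^2 + (1 + b)^2)) := by
        linear_combination (-2*a*b - a^3) * hu + (-b + b^3 - a^2) * hv + (-a - a*b^2) * hw + (1 - b^2 - a^2*b) * h1
      have ky : (a^4 + 4*a^2*b - 1 + 2*b^2 - b^4) * y = (-(a + 1 - b) * (a^2 + (1 + b)^2)) := by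
        linear_combination (-b + b^3 - a^2) * hu + (-a - a*b^2) * hv + (-1 + b^2 + a^2*b) * hw + (2*a*b + a^3) * h1
      right; left
      rw [Prod.mk.injEq]
      constructor
      · rw [eq_div_iff (ne_of_lt honm)]
        apply mul_left_cancel₀ (ne_of_gt hDp)
        linear_combination (1 - a - b) * kx
      · rw [eq_div_iff (ne_of_lt honm)]
        apply mul_left_cancel₀ (ne_of_gt hDp)
        linear_combination (1 - a - b) * ky
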